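/- The SI-T-2 scheme is second-order consistent on the linear test problem: e^{z+w} − R_{SI-T-2}(z,w) = O((|z|+|w|)³) as (z,w) → (0,0), where R_{SI-T-2}(z,w) = (1 + z + (z²+zw)/2)/(1 − w + (zw+w²)/2). -/

import Mathlib

/-- Second-order consistency of SI-T-2 on the linear test problem:
`e^{z+w} − R_{SI-T-2}(z,w) = O((|z|+|w|)³)` as `(z,w) → (0,0)`. -/
theorem sit2_second_order_consistent :
    ∃ C δ : ℝ, 0 < C ∧ 0 < δ ∧ ∀ z w : ℂ,
      ‖z‖ + ‖w‖ < δ →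
      ‖Complex.exp (z + w)
          - (1 + z + (z ^ 2 + z * w) / 2) / (1 - w + (z * w + w ^ 2) / 2)‖
        ≤ C * (‖z‖ + ‖w‖) ^ 3 := by
  refine ⟨4, 1/2, by norm_num, by norm_num, fun z w hs => ?_⟩
  have habs_sub : ∀ a b : ℂ, ‖a - b‖ ≤ ‖a‖ + ‖b‖ :=
    fun a b => by simpa [sub_eq_add_neg] using norm_add_le a (-b)
  have habs_lb : ∀ a b : ℂ, ‖a‖ - ‖b‖ ≤ ‖a - b‖ :=
    fun a b => by simpa using norm_sub_norm_le a b
  set s : ℝ := ‖z‖ + ‖w‖ with hsdef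
  have hz0 : (0:ℝ) ≤ ‖z‖ := norm_nonneg z
  have hw0 : (0:ℝ) ≤ ‖w‖ := norm_nonneg w
  have hs0 : 0 ≤ s := by positivity
  have hzs : ‖z‖ ≤ s := by simp [hsdef, hw0]
  have hws : ‖w‖ ≤ s := by simp [hsdef, hz0]
  have hu : ‖z + w‖ ≤ s := norm_add_le z w
  have hshalf : s < 1/2 := hs
  set u : ℂ := z + w with hudef
  set D : ℂ := 1 - w + (z * w + w ^ 2) / 2 with hDdef
  set N : ℂ := 1 + z + (z ^ 2 + z * w) / 2 with hNdef
  have hzw2 : ‖(z * w + w ^ 2) / 2‖ ≤ s ^ 2 := by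
    rw [norm_div]
    have h1 : ‖z * w + w ^ 2‖
        ≤ ‖z‖ * ‖w‖ + ‖w‖ ^ 2 := by
      calc ‖z * w + w ^ 2‖
          ≤ ‖z * w‖ + ‖w ^ 2‖ := norm_add_le _ _
        _ = ‖z‖ * ‖w‖ + ‖w‖ ^ 2 := by
            simp [norm_mul, norm_pow]
    have h2 : ‖z‖ * ‖w‖ + ‖w‖ ^ 2 ≤ 2 * s ^ 2 := by
      nlinarith
    have : ‖(2:ℂ)‖ = 2 := by norm_num
    rw [this]
    have h3 := h1.trans h2
    calc ‖z * w + w ^ 2‖ / 2 ≤ (2 * s ^ 2) / 2 := by gcongr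
      _ = s ^ 2 := by ring
  have hDsmall : ‖w - (z * w + w ^ 2) / 2‖ ≤ s + s ^ 2 := by
    calc ‖w - (z * w + w ^ 2) / 2‖
        ≤ ‖w‖ + ‖(z * w + w ^ 2) / 2‖ := habs_sub _ _
      _ ≤ s + s ^ 2 := add_le_add hws hzw2
  have hDeq : D = 1 - (w - (z * w + w ^ 2) / 2) := by rw [hDdef]; ring
  have hDlb : (1:ℝ)/4 ≤ ‖D‖ := by
    have h1 := habs_lb (1:ℂ) (w - (z * w + w ^ 2) / 2)
    rw [← hDeq] at h1
    simp only [norm_one] at h1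
    have h2 : s + s ^ 2 ≤ 3/4 := by nlinarith
    linarith
  have hDub : ‖D‖ ≤ 7/4 := by
    rw [hDeq]
    calc ‖1 - (w - (z * w + w ^ 2) / 2)‖
        ≤ ‖(1:ℂ)‖ + ‖w - (z * w + w ^ 2) / 2‖ := habs_sub _ _
      _ ≤ 1 + (s + s ^ 2) := by rw [norm_one]; linarith
      _ ≤ 7/4 := by nlinarith
  have hDne : D ≠ 0 := by
    intro h
    rw [h, norm_zero] at hDlb
    linarith
  set E : ℂ := Complex.exp u - (1 + u + u ^ 2 / 2) with hEdef
  have hEbound : ‖E‖ ≤ 2/9 * s ^ 3 := by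
    have h1 : ‖u‖ ≤ 1 := hu.trans (by linarith)
    have hb := Complex.exp_bound h1 (by norm_num : 0 < 3)
    have hsum : ∑ m ∈ Finset.range 3, u ^ m / (m.factorial : ℂ) = 1 + u + u ^ 2 / 2 := by
      simp [Finset.sum_range_succ, Nat.factorial]
    rw [hsum] at hb
    norm_num [Nat.factorial] at hb
    calc ‖E‖ ≤ ‖u‖ ^ 3 * (2/9) := by linarith [hb]
      _ ≤ s ^ 3 * (2/9) := by gcongr
      _ = 2/9 * s ^ 3 := by ring
  have hnumid : Complex.exp u * D - N = E * D + w * u ^ 3 / 4 := by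
    rw [hEdef, hudef, hNdef, hDdef]
    ring
  have key : Complex.exp u - N / D = (E * D + w * u ^ 3 / 4) / D := by
    rw [← hnumid, sub_div, mul_div_cancel_right₀ _ hDne]
  have hgoal : ‖Complex.exp u - N / D‖ ≤ 4 * s ^ 3 := by
    rw [key, norm_div]
    have hnum : ‖E * D + w * u ^ 3 / 4‖ ≤ s ^ 3 := by
      have h1 : ‖E * D‖ ≤ (2/9 * s ^ 3) * (7/4) := by
        rw [norm_mul]
        exact mul_le_mul hEbound hDub (norm_nonneg _) (by positivity)
      have h2 : ‖w * u ^ 3 / 4‖ ≤ s * s ^ 3 / 4 := by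
        rw [norm_div, norm_mul, norm_pow]
        have : ‖(4:ℂ)‖ = 4 := by norm_num
        rw [this]
        gcongr
      calc ‖E * D + w * u ^ 3 / 4‖
          ≤ ‖E * D‖ + ‖w * u ^ 3 / 4‖ := norm_add_le _ _
        _ ≤ (2/9 * s ^ 3) * (7/4) + s * s ^ 3 / 4 := add_le_add h1 h2
        _ ≤ s ^ 3 := by nlinarith [pow_nonneg hs0 3,
            mul_le_mul_of_nonneg_right hshalf.le (pow_nonneg hs0 3)]
    calc ‖E * D + w * u ^ 3 / 4‖ / ‖D‖
        ≤ s ^ 3 / (1/4) := div_le_div₀ (by positivity) hnum (by norm_num) hDlb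
      _ = 4 * s ^ 3 := by ring
  simpa [hudef, hNdef, hDdef] using hgoal
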